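/- Under the hypotheses of an ℓ-multicover of K_{m+1}: (b−ℓ)μ = ℓ(ℓm − ℓ − λ). -/

import Mathlib

/-- Under the hypotheses of an `ℓ`-multicover of `K_{m+1}`: `(b-ℓ)μ = ℓ(ℓm - ℓ - λ)`. -/
theorem stmt11 {V : Type*} [Fintype V] (Γ : SimpleGraph V) [DecidableRel Γ.Adj]
    (n k l μ m b ℓ : ℕ)
    (hsrg : Γ.IsSRGWith n k l μ) (hconn : Γ.Connected)
    (hnc : ∃ u v : V, u ≠ v ∧ ¬ Γ.Adj u v)
    (f : V → Fin (m + 1))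
    (hsize : ∀ i : Fin (m + 1), ({v : V | f v = i}).ncard = b)
    (hind : ∀ u v : V, Γ.Adj u v → f u ≠ f v)
    (hmc : ∀ (v : V) (i : Fin (m + 1)), f v ≠ i →
      ({w : V | Γ.Adj v w ∧ f w = i}).ncard = ℓ)
    (hb : 2 ≤ b) (hm : 2 ≤ m) (hl : 1 ≤ ℓ)
    (hk : k = ℓ * m) (hn : n = (m + 1) * b) :
    ((b : ℤ) - ℓ) * μ = (ℓ : ℤ) * ((ℓ : ℤ) * m - ℓ - l) := by
  classical
  obtain ⟨v, _, _, _⟩ := hnc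
  haveI : Nontrivial (Fin (m + 1)) :=
    ⟨⟨⟨0, by omega⟩, ⟨1, by omega⟩, by simp [Fin.ext_iff]⟩⟩
  obtain ⟨i, hi⟩ := exists_ne (f v)
  have hfvi : f v ≠ i := Ne.symm hi
  set Nv := Γ.neighborFinset v with hNv
  set Fi := Finset.univ.filter (fun w : V => f w = i) with hFiDef
  -- generic ncard → filter-card conversion
  have hncard : ∀ p : V → Prop, ∀ _ : DecidablePred p,
      ({w : V | p w} : Set V).ncard = (Finset.univ.filter p).card := by
    intro p hp
    rw [Set.ncard_eq_toFinset_card']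
    congr 1
    ext w
    simp
  -- double counting
  have hdc : ∑ w ∈ Fi, (Nv.filter (fun u => Γ.Adj w u)).card
      = ∑ u ∈ Nv, (Fi.filter (fun w => Γ.Adj w u)).card := by
    simp_rw [Finset.card_filter]
    exact Finset.sum_comm
  -- card of fibre i
  have hFib : Fi.card = b := by
    have := hsize i
    rwa [hncard (fun w => f w = i) (by infer_instance)] at this
  -- card of N(v) ∩ fibre i, as a filter of Fi
  have hcA : (Fi.filter (fun w => Γ.Adj v w)).card = ℓ := by
    have h := hmc v i hfvi
    rw [hncard (fun w => Γ.Adj v w ∧ f w = i) (by infer_instance)] at h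
    rw [← h, hFiDef, Finset.filter_filter]
    congr 1
    ext w
    simp [and_comm]
  -- card of N(v) ∩ fibre i, as a filter of Nv
  have hcA' : (Nv.filter (fun u => f u = i)).card = ℓ := by
    have h := hmc v i hfvi
    rw [hncard (fun w => Γ.Adj v w ∧ f w = i) (by infer_instance)] at h
    rw [← h]
    congr 1
    ext w
    simp [hNv]
  have hNvcard : Nv.card = k := hsrg.regular v
  -- split the two sums
  set cB := (Fi.filter (fun w => ¬ Γ.Adj v w)).card with hcBdef
  set cC := (Nv.filter (fun u => ¬ f u = i)).card with hcCdef
  have hA : ℓ + cB = b := by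
    rw [← hcA, hcBdef, Finset.card_filter_add_card_filter_not, hFib]
  have hC : ℓ + cC = ℓ * m := by
    have h := Finset.card_filter_add_card_filter_not (s := Nv) (p := fun u => f u = i)
    rw [hcA', hNvcard, hk] at h
    exact h
  -- evaluate LHS of double count
  have hLHS : ∑ w ∈ Fi, (Nv.filter (fun u => Γ.Adj w u)).card = ℓ * l + cB * μ := by
    rw [← Finset.sum_filter_add_sum_filter_not Fi (fun w => Γ.Adj v w)]
    have hcommon : ∀ w : V, (Nv.filter (fun u => Γ.Adj w u)).card
        = Fintype.card (Γ.commonNeighbors v w) := by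
      intro w
      rw [← Set.toFinset_card]
      congr 1
      ext u
      simp [hNv, SimpleGraph.mem_commonNeighbors]
    have h1 : ∑ w ∈ Fi.filter (fun w => Γ.Adj v w),
        (Nv.filter (fun u => Γ.Adj w u)).card = ℓ * l := by
      rw [Finset.sum_congr rfl (fun w hw => ?_), Finset.sum_const, hcA, smul_eq_mul]
      rw [hcommon w]
      exact hsrg.of_adj v w (Finset.mem_filter.mp hw).2
    have h2 : ∑ w ∈ Fi.filter (fun w => ¬ Γ.Adj v w),
        (Nv.filter (fun u => Γ.Adj w u)).card = cB * μ := by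
      rw [Finset.sum_congr rfl (fun w hw => ?_), Finset.sum_const, smul_eq_mul]
      obtain ⟨hwFi, hnadj⟩ := Finset.mem_filter.mp hw
      have hwv : v ≠ w := by
        intro h
        apply hfvi
        rw [h]
        exact (Finset.mem_filter.mp hwFi).2
      rw [hcommon w]
      exact hsrg.of_not_adj hwv hnadj
    rw [h1, h2]
  -- evaluate RHS of double count
  have hRHS : ∑ u ∈ Nv, (Fi.filter (fun w => Γ.Adj w u)).card = cC * ℓ := by
    rw [← Finset.sum_filter_add_sum_filter_not Nv (fun u => ¬ f u = i)]
    have h1 : ∑ u ∈ Nv.filter (fun u => ¬ f u = i),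
        (Fi.filter (fun w => Γ.Adj w u)).card = cC * ℓ := by
      rw [Finset.sum_congr rfl (fun u hu => ?_), Finset.sum_const, smul_eq_mul]
      obtain ⟨huNv, hui⟩ := Finset.mem_filter.mp hu
      have h := hmc u i hui
      rw [hncard (fun w => Γ.Adj u w ∧ f w = i) (by infer_instance)] at h
      rw [← h, hFiDef, Finset.filter_filter]
      congr 1
      ext w
      simp only [Finset.mem_filter, Finset.mem_univ, true_and]
      constructor
      · rintro ⟨h1, h2⟩; exact ⟨h2.symm, h1⟩
      · rintro ⟨h1, h2⟩; exact ⟨h2, h1.symm⟩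
    have h2 : ∑ u ∈ Nv.filter (fun u => ¬¬ f u = i),
        (Fi.filter (fun w => Γ.Adj w u)).card = 0 := by
      apply Finset.sum_eq_zero
      intro u hu
      obtain ⟨huNv, hui⟩ := Finset.mem_filter.mp hu
      rw [not_not] at hui
      rw [Finset.card_eq_zero, Finset.filter_eq_empty_iff]
      intro w hw hadj
      exact hind w u hadj (((Finset.mem_filter.mp hw).2).trans hui.symm)
    rw [h1, h2, add_zero]
  have hmain : ℓ * l + cB * μ = cC * ℓ := by rw [← hLHS, hdc, hRHS]
  -- arithmetic
  have hA' : (ℓ : ℤ) + cB = b := by exact_mod_cast congrArg (Nat.cast : ℕ → ℤ) hA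
  have hC' : (ℓ : ℤ) + cC = ℓ * m := by exact_mod_cast congrArg (Nat.cast : ℕ → ℤ) hC
  have hmain' : (ℓ : ℤ) * l + cB * μ = cC * ℓ := by
    exact_mod_cast congrArg (Nat.cast : ℕ → ℤ) hmain
  have hb' : (b : ℤ) = ℓ + cB := hA'.symm
  rw [hb', ← hC']
  ring_nf
  ring_nf at hmain'
  linarith [hmain']
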